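/- For all X, Y ∈ V one has P(G(X,Y)) + G(PX,PY) = 0. -/
import Mathlib


open Matrix

/-- The indefinite inner product `⟨a,b⟩ = -(1/2)·Trace(adj(a)·b)` on 2×2 real matrices. -/
noncomputable def ip (a b : Matrix (Fin 2) (Fin 2) ℝ) : ℝ :=
  -(1/2 : ℝ) * (a.adjugate * b).trace

/-- The product metric `⟨(α,β),(γ,δ)⟩_E = ⟨α,γ⟩ + ⟨β,δ⟩`. -/
noncomputable def ipE (X Y : Matrix (Fin 2) (Fin 2) ℝ × Matrix (Fin 2) (Fin 2) ℝ) : ℝ :=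
  ip X.1 Y.1 + ip X.2 Y.2

/-- The nearly Kähler metric `g`. -/
noncomputable def g (X Y : Matrix (Fin 2) (Fin 2) ℝ × Matrix (Fin 2) (Fin 2) ℝ) : ℝ :=
  (2/3 : ℝ) * ipE X Y - (1/3 : ℝ) * ipE (X.2, X.1) Y

/-- The almost complex structure `J(α,β) = (1/√3)·(α − 2β, 2α − β)`. -/
noncomputable def Jmap (X : Matrix (Fin 2) (Fin 2) ℝ × Matrix (Fin 2) (Fin 2) ℝ) :
    Matrix (Fin 2) (Fin 2) ℝ × Matrix (Fin 2) (Fin 2) ℝ :=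
  (Real.sqrt 3)⁻¹ • (X.1 - (2:ℝ) • X.2, (2:ℝ) • X.1 - X.2)

/-- The almost product structure `P(α,β) = (β,α)`. -/
def Pmap (X : Matrix (Fin 2) (Fin 2) ℝ × Matrix (Fin 2) (Fin 2) ℝ) :
    Matrix (Fin 2) (Fin 2) ℝ × Matrix (Fin 2) (Fin 2) ℝ :=
  (X.2, X.1)

/-- The cross product `α×β = (1/2)(αβ − βα)` on `sl(2,ℝ)`. -/
noncomputable def cross (a b : Matrix (Fin 2) (Fin 2) ℝ) : Matrix (Fin 2) (Fin 2) ℝ :=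
  (1/2 : ℝ) • (a * b - b * a)

/-- The tensor `G`. -/
noncomputable def Gmap (X Y : Matrix (Fin 2) (Fin 2) ℝ × Matrix (Fin 2) (Fin 2) ℝ) :
    Matrix (Fin 2) (Fin 2) ℝ × Matrix (Fin 2) (Fin 2) ℝ :=
  (2 / (3 * Real.sqrt 3)) •
    (-(cross X.1 Y.1) - cross X.1 Y.2 + cross Y.1 X.2 + (2:ℝ) • cross X.2 Y.2,
     -((2:ℝ) • cross X.1 Y.1) + cross X.1 Y.2 - cross Y.1 X.2 + cross X.2 Y.2)

/-- `P(G(X,Y)) + G(PX,PY) = 0` on `V = sl(2,ℝ) × sl(2,ℝ)`. -/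
theorem stmt_11 (X Y : Matrix (Fin 2) (Fin 2) ℝ × Matrix (Fin 2) (Fin 2) ℝ)
    (hX1 : X.1.trace = 0) (hX2 : X.2.trace = 0)
    (hY1 : Y.1.trace = 0) (hY2 : Y.2.trace = 0) :
    Pmap (Gmap X Y) + Gmap (Pmap X) (Pmap Y) = 0 := by
  simp only [Pmap, Gmap, cross, Prod.smul_mk, Prod.mk_add_mk, Prod.mk_eq_zero]
  constructor <;> module
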